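/- Constant utility slope under one-period finite dependence (Corollary 2): Let Q_A be an X×X row-stochastic real matrix, let Q_a be an X×X real matrix satisfying Q_a Q_A = Q_A² (one-period finite dependence), let p_A, p_a ∈ ℝ^X have all entries in (0,1), and define π_a(t) := (I_X − tQ_a)(I_X − tQ_A)⁻¹(−log p_A) + log p_a for t ∈ [0,1). Then for every β ∈ [0,1), π_a is differentiable at β with derivative ∂π_a/∂β = (−Q_a + Q_A)(−log p_A), which does not depend on β. Consequently, for each state x ∈ {1,…,X}, with ξ_x denoting the x-th entry of (−Q_a + Q_A)(−log p_A), the function β ↦ π_a(β)(x) on [0,1) is strictly increasing if ξ_x > 0, strictly decreasing if ξ_x < 0, and constant if ξ_x = 0. -/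

import Mathlib

attribute [local instance] Matrix.linftyOpNormedRing Matrix.linftyOpNormedAlgebra

/-- Constant utility slope under one-period finite dependence (Corollary 2). -/
theorem stmt_9 (X : ℕ) (QA Qa : Matrix (Fin X) (Fin X) ℝ)
    (hQAnonneg : ∀ i j, 0 ≤ QA i j)
    (hQArow : ∀ i, ∑ j, QA i j = 1)
    (hfd : Qa * QA = QA ^ 2)
    (pA pa : Fin X → ℝ)
    (hpA : ∀ x, pA x ∈ Set.Ioo (0 : ℝ) 1)
    (hpa : ∀ x, pa x ∈ Set.Ioo (0 : ℝ) 1) :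
    let πa : ℝ → Fin X → ℝ := fun t =>
      (((1 : Matrix (Fin X) (Fin X) ℝ) - t • Qa) * (1 - t • QA)⁻¹).mulVec
          (fun x => -Real.log (pA x))
        + fun x => Real.log (pa x)
    let ξ : Fin X → ℝ := (-Qa + QA).mulVec (fun x => -Real.log (pA x))
    (∀ β ∈ Set.Ico (0 : ℝ) 1, HasDerivAt πa ξ β) ∧
      ∀ x : Fin X,
        (0 < ξ x → StrictMonoOn (fun β => πa β x) (Set.Ico (0 : ℝ) 1)) ∧
        (ξ x < 0 → StrictAntiOn (fun β => πa β x) (Set.Ico (0 : ℝ) 1)) ∧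
        (ξ x = 0 → ∀ β₁ ∈ Set.Ico (0 : ℝ) 1, ∀ β₂ ∈ Set.Ico (0 : ℝ) 1,
          πa β₁ x = πa β₂ x) := by
  intro πa ξ
  set v : Fin X → ℝ := fun x => -Real.log (pA x) with hv
  set c : Fin X → ℝ := fun x => Real.log (pa x) with hc
  -- QA - Qa annihilates QA
  have hann : (QA - Qa) * QA = 0 := by
    rw [Matrix.sub_mul, hfd, sq, sub_self]
  -- norm bound
  have hnorm : ‖QA‖ ≤ 1 := by
    rw [Matrix.linfty_opNorm_def]
    have h1 : (Finset.univ.sup fun i : Fin X => ∑ j, ‖QA i j‖₊ : NNReal) ≤ 1 := by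
      apply Finset.sup_le
      intro i _
      have : ((∑ j, ‖QA i j‖₊ : NNReal) : ℝ) ≤ ((1 : NNReal) : ℝ) := by
        push_cast
        have : ∀ j ∈ Finset.univ, ‖QA i j‖ = QA i j := fun j _ => by
          rw [Real.norm_eq_abs, abs_of_nonneg (hQAnonneg i j)]
        rw [Finset.sum_congr rfl this, hQArow i]
      exact_mod_cast this
    exact_mod_cast h1
  -- invertibility
  have hdet : ∀ t : ℝ, |t| < 1 → IsUnit ((1 - t • QA).det) := by
    intro t ht
    have h1 : ‖t • QA‖ < 1 := by
      calc ‖t • QA‖ = |t| * ‖QA‖ := by rw [norm_smul, Real.norm_eq_abs]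
        _ ≤ |t| * 1 := mul_le_mul_of_nonneg_left hnorm (abs_nonneg t)
        _ = |t| := mul_one _
        _ < 1 := ht
    exact (Matrix.isUnit_iff_isUnit_det _).mp (Units.oneSub (t • QA) h1).isUnit
  -- the key closed form
  have key : ∀ t : ℝ, |t| < 1 → πa t = v + t • ξ + c := by
    intro t ht
    have hu := hdet t ht
    have hmul : ((1 : Matrix (Fin X) (Fin X) ℝ) - t • Qa) * (1 - t • QA)⁻¹
        = 1 + t • (QA - Qa) := by
      have hsplit : (1 : Matrix (Fin X) (Fin X) ℝ) - t • Qa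
          = (1 - t • QA) + t • (QA - Qa) := by
        rw [smul_sub]; abel
      have hcanc : (QA - Qa) * (1 - t • QA) = QA - Qa := by
        rw [Matrix.mul_sub, Matrix.mul_one, Matrix.mul_smul, hann, smul_zero, sub_zero]
      calc ((1 : Matrix (Fin X) (Fin X) ℝ) - t • Qa) * (1 - t • QA)⁻¹
          = ((1 - t • QA) + t • (QA - Qa)) * (1 - t • QA)⁻¹ := by rw [← hsplit]
        _ = (1 - t • QA) * (1 - t • QA)⁻¹ + t • ((QA - Qa) * (1 - t • QA)⁻¹) := by
            rw [Matrix.add_mul, Matrix.smul_mul]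
        _ = 1 + t • ((QA - Qa) * (1 - t • QA) * (1 - t • QA)⁻¹) := by
            rw [Matrix.mul_nonsing_inv _ hu, hcanc]
        _ = 1 + t • (QA - Qa) := by rw [Matrix.mul_nonsing_inv_cancel_right _ _ hu]
    have hxi : ξ = (QA - Qa).mulVec v := by
      show (-Qa + QA).mulVec v = _
      rw [neg_add_eq_sub]
    show (((1 : Matrix (Fin X) (Fin X) ℝ) - t • Qa) * (1 - t • QA)⁻¹).mulVec v + c
        = v + t • ξ + c
    rw [hmul, Matrix.add_mulVec, Matrix.one_mulVec, Matrix.smul_mulVec, hxi]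
  have habs : ∀ β : ℝ, β ∈ Set.Ico (0 : ℝ) 1 → |β| < 1 := fun β hβ =>
    abs_lt.mpr ⟨lt_of_lt_of_le (by norm_num) hβ.1, hβ.2⟩
  constructor
  · intro β hβ
    have hd : HasDerivAt (fun t : ℝ => v + t • ξ + c) ξ β := by
      have h1 : HasDerivAt (fun t : ℝ => t • ξ) ((1 : ℝ) • ξ) β :=
        (hasDerivAt_id β).smul_const ξ
      rw [one_smul] at h1
      exact (h1.const_add v).add_const c
    refine hd.congr_of_eventuallyEq ?_
    have hmem : Set.Ioo (-1 : ℝ) 1 ∈ nhds β :=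
      Ioo_mem_nhds (lt_of_lt_of_le (by norm_num) hβ.1) hβ.2
    filter_upwards [hmem] with t ht
    exact key t (abs_lt.mpr ⟨ht.1, ht.2⟩)
  · intro x
    have hval : ∀ β ∈ Set.Ico (0 : ℝ) 1, πa β x = v x + β * ξ x + c x := by
      intro β hβ
      rw [key β (habs β hβ)]
      rfl
    refine ⟨?_, ?_, ?_⟩
    · intro hpos β₁ h₁ β₂ h₂ hlt
      simp only [hval β₁ h₁, hval β₂ h₂]
      have : β₁ * ξ x < β₂ * ξ x := mul_lt_mul_of_pos_right hlt hpos
      linarith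
    · intro hneg β₁ h₁ β₂ h₂ hlt
      simp only [hval β₁ h₁, hval β₂ h₂]
      have : β₂ * ξ x < β₁ * ξ x := (mul_lt_mul_right_of_neg hneg).mpr hlt
      linarith
    · intro hzero β₁ h₁ β₂ h₂
      simp only [hval β₁ h₁, hval β₂ h₂, hzero, mul_zero]
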